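/- Product t-design theorem for SL(2,ℂ): let t ∈ ℕ and let v : ℝ → ℝ be a nonnegative measurable function supported on [1,∞) such that the measure μ_A on [1,∞) with density v with respect to Lebesgue measure is finite with total mass Z > 0 and all entries of x ↦ A_x^{⊗t} ⊗ (A_x^*)^{⊗t} are μ_A-integrable. Suppose {(K_α, k_α)}_{α∈I} is a finite family in the special unitary group SU(2) with real weights such that ∑_α k_α · K_α^{⊗t} ⊗ (K_α^*)^{⊗t} = ∫_{SU(2)} U^{⊗t} ⊗ (U^*)^{⊗t} dμ_K, where μ_K is the normalized (probability) Haar measure on SU(2); and suppose {(x_β, a_β)}_{β∈J} is a finite family with x_β ≥ 1 and real weights such that ∑_β a_β · A_{x_β}^{⊗t} ⊗ (A_{x_β}^*)^{⊗t} = (1/Z) ∫_1^∞ A_x^{⊗t} ⊗ (A_x^*)^{⊗t} v(x) dx. Then ∑_{α,β,γ∈I×J×I} k_α · a_β · k_γ · (K_α · A_{x_β} · K_γ)^{⊗t} ⊗ ((K_α · A_{x_β} · K_γ)^*)^{⊗t} = (1/Z) ∫_{SU(2)} ∫_1^∞ ∫_{SU(2)} (K · A_x · K')^{⊗t} ⊗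 ((K · A_x · K')^*)^{⊗t} dμ_K(K') v(x) dx dμ_K(K). -/

import Mathlib

open Matrix MeasureTheory
open scoped Kronecker

/-- Matrices inherit the (Borel) product measurable structure of functions. -/
noncomputable instance matrixMeasurableSpace (m n : Type*) : MeasurableSpace (Matrix m n ℂ) :=
  inferInstanceAs (MeasurableSpace (m → n → ℂ))

/-- The special unitary group is a group (inverse given by the conjugate transpose). -/
noncomputable instance specialUnitaryGroup.group {n : Type*} [DecidableEq n] [Fintype n] :
    Group ↥(Matrix.specialUnitaryGroup n ℂ) :=
  { (inferInstance : Monoid ↥(Matrix.specialUnitaryGroup n ℂ)) with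
    inv := fun A => ⟨star A.1, by
      obtain ⟨hu, hd⟩ := Matrix.mem_specialUnitaryGroup_iff.mp A.2
      refine Matrix.mem_specialUnitaryGroup_iff.mpr ⟨Unitary.star_mem hu, ?_⟩
      rw [Matrix.star_eq_conjTranspose, Matrix.det_conjTranspose, hd, star_one]⟩
    inv_mul_cancel := fun A => Subtype.ext A.2.1.1 }

/-- The `t`-fold Kronecker power of a `d × d` complex matrix:
`L^{⊗t}(i,j) = ∏_{s<t} L (i s) (j s)`. -/
noncomputable def kroneckerPow {d : ℕ} (t : ℕ) (L : Matrix (Fin d) (Fin d) ℂ) :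
    Matrix (Fin t → Fin d) (Fin t → Fin d) ℂ :=
  fun i j => ∏ s : Fin t, L (i s) (j s)

/-- `L^{⊗t} ⊗ (L^*)^{⊗t}`, the matrix averaged in the definition of a `t`-design. -/
noncomputable def designMat {d : ℕ} (t : ℕ) (L : Matrix (Fin d) (Fin d) ℂ) :
    Matrix ((Fin t → Fin d) × (Fin t → Fin d)) ((Fin t → Fin d) × (Fin t → Fin d)) ℂ :=
  kroneckerPow t L ⊗ₖ kroneckerPow t (L.map (starRingEnd ℂ))

/-- `A_x = diag(x, x⁻¹)` as a `2 × 2` complex matrix, for a real parameter `x`. -/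
noncomputable def Ax (x : ℝ) : Matrix (Fin 2) (Fin 2) ℂ :=
  Matrix.diagonal ![(x : ℂ), (x : ℂ)⁻¹]

lemma kroneckerPow_mul {d : ℕ} (t : ℕ) (A B : Matrix (Fin d) (Fin d) ℂ) :
    kroneckerPow t (A * B) = kroneckerPow t A * kroneckerPow t B := by
  ext i j
  simp only [kroneckerPow, Matrix.mul_apply]
  rw [Finset.prod_univ_sum]
  rw [Fintype.piFinset_univ]
  exact Finset.sum_congr rfl fun f _ => by rw [Finset.prod_mul_distrib]

lemma designMat_mul {d : ℕ} (t : ℕ) (A B : Matrix (Fin d) (Fin d) ℂ) :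
    designMat t (A * B) = designMat t A * designMat t B := by
  unfold designMat
  rw [Matrix.map_mul, kroneckerPow_mul, kroneckerPow_mul, Matrix.mul_kronecker_mul]

lemma norm_designMat_le (t : ℕ) (U : ↥(Matrix.specialUnitaryGroup (Fin 2) ℂ))
    (p q : (Fin t → Fin 2) × (Fin t → Fin 2)) :
    ‖designMat t (U : Matrix (Fin 2) (Fin 2) ℂ) p q‖ ≤ 1 := by
  have hb : ∀ i j, ‖(U : Matrix (Fin 2) (Fin 2) ℂ) i j‖ ≤ 1 :=
    fun i j => entry_norm_bound_of_unitary U.2.1 i j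
  have h1 : ‖kroneckerPow t (U : Matrix (Fin 2) (Fin 2) ℂ) p.1 q.1‖ ≤ 1 := by
    rw [kroneckerPow, norm_prod]
    exact Finset.prod_le_one (fun s _ => norm_nonneg _) (fun s _ => hb _ _)
  have h2 : ‖kroneckerPow t ((U : Matrix (Fin 2) (Fin 2) ℂ).map (starRingEnd ℂ)) p.2 q.2‖ ≤ 1 := by
    rw [kroneckerPow, norm_prod]
    refine Finset.prod_le_one (fun s _ => norm_nonneg _) (fun s _ => ?_)
    simpa [Matrix.map_apply] using hb (p.2 s) (q.2 s)
  calc ‖designMat t (U : Matrix (Fin 2) (Fin 2) ℂ) p q‖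
      = ‖kroneckerPow t (U : Matrix (Fin 2) (Fin 2) ℂ) p.1 q.1‖ *
        ‖kroneckerPow t ((U : Matrix (Fin 2) (Fin 2) ℂ).map (starRingEnd ℂ)) p.2 q.2‖ := by
        rw [designMat, Matrix.kroneckerMap_apply, norm_mul]
    _ ≤ 1 * 1 := mul_le_mul h1 h2 (norm_nonneg _) zero_le_one
    _ = 1 := one_mul 1

lemma measurable_designMat (t : ℕ) (p q : (Fin t → Fin 2) × (Fin t → Fin 2)) :
    Measurable (fun U : ↥(Matrix.specialUnitaryGroup (Fin 2) ℂ) =>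
      designMat t (U : Matrix (Fin 2) (Fin 2) ℂ) p q) := by
  have hcoe : Measurable (fun U : ↥(Matrix.specialUnitaryGroup (Fin 2) ℂ) =>
      (U : Matrix (Fin 2) (Fin 2) ℂ)) := measurable_subtype_coe
  have hentry : ∀ i j : Fin 2,
      Measurable (fun M : Matrix (Fin 2) (Fin 2) ℂ => M i j) := fun i j =>
    (measurable_pi_apply (X := fun _ : Fin 2 => ℂ) j).comp
      (measurable_pi_apply (X := fun _ : Fin 2 => Fin 2 → ℂ) i)
  have h1 : Measurable (fun M : Matrix (Fin 2) (Fin 2) ℂ => designMat t M p q) := by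
    simp only [designMat, Matrix.kroneckerMap_apply, kroneckerPow, Matrix.map_apply]
    exact (Finset.measurable_prod _ fun s _ => hentry _ _).mul
      (Finset.measurable_prod _ fun s _ => (RCLike.continuous_conj (K := ℂ)).measurable.comp (hentry _ _))
  exact h1.comp hcoe

lemma integrable_designMat (t : ℕ) (μK : Measure ↥(Matrix.specialUnitaryGroup (Fin 2) ℂ))
    [IsProbabilityMeasure μK] (p q : (Fin t → Fin 2) × (Fin t → Fin 2)) :
    Integrable (fun U : ↥(Matrix.specialUnitaryGroup (Fin 2) ℂ) =>
      designMat t (U : Matrix (Fin 2) (Fin 2) ℂ) p q) μK :=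
  Integrable.mono' (integrable_const 1) (measurable_designMat t p q).aestronglyMeasurable
    (ae_of_all _ fun U => norm_designMat_le t U p q)

/-- Product `t`-design theorem for `SL(2,ℂ)`: a `t`-design on `SU(2)`
combined with a finite averaging set for the weighted non-compact factor `{A_x : x ≥ 1}`
yields, by taking products `K_α · A_{x_β} · K_γ` with product weights, a finite averaging set
for the weighted integral over all of `SL(2,ℂ)` in Cartan coordinates
(all integrals entrywise; `μK` is the normalized Haar probability measure on `SU(2)`). -/
theorem product_t_design_SL2C (t : ℕ)
    (v : ℝ → ℝ) (hv_meas : Measurable v) (hv_nonneg : ∀ x, 0 ≤ v x)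
    (hv_supp : Function.support v ⊆ Set.Ici 1)
    (hv_int : IntegrableOn v (Set.Ici (1 : ℝ)))
    (Z : ℝ) (hZ : Z = ∫ x in Set.Ici (1 : ℝ), v x) (hZpos : 0 < Z)
    (hint : ∀ p q : (Fin t → Fin 2) × (Fin t → Fin 2),
      IntegrableOn (fun x : ℝ => (v x : ℂ) * designMat t (Ax x) p q) (Set.Ici (1 : ℝ)))
    (μK : Measure ↥(Matrix.specialUnitaryGroup (Fin 2) ℂ))
    [μK.IsHaarMeasure] [IsProbabilityMeasure μK]
    {I J : Type*} [Fintype I] [Fintype J]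
    (K : I → ↥(Matrix.specialUnitaryGroup (Fin 2) ℂ)) (k : I → ℝ)
    (xs : J → ℝ) (a : J → ℝ) (hxs : ∀ β, 1 ≤ xs β)
    (hKdesign : ∀ p q : (Fin t → Fin 2) × (Fin t → Fin 2),
      (∑ α : I, (k α : ℂ) • designMat t ((K α : Matrix (Fin 2) (Fin 2) ℂ))) p q =
        ∫ U : ↥(Matrix.specialUnitaryGroup (Fin 2) ℂ),
          designMat t (U : Matrix (Fin 2) (Fin 2) ℂ) p q ∂μK)
    (hAdesign : ∀ p q : (Fin t → Fin 2) × (Fin t → Fin 2),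
      (∑ β : J, (a β : ℂ) • designMat t (Ax (xs β))) p q =
        (1 / Z : ℂ) * ∫ x in Set.Ici (1 : ℝ), (v x : ℂ) * designMat t (Ax x) p q) :
    ∀ p q : (Fin t → Fin 2) × (Fin t → Fin 2),
      (∑ α : I, ∑ β : J, ∑ γ : I, ((k α * a β * k γ : ℝ) : ℂ) •
          designMat t ((K α : Matrix (Fin 2) (Fin 2) ℂ) * Ax (xs β) *
            (K γ : Matrix (Fin 2) (Fin 2) ℂ))) p q =
        (1 / Z : ℂ) * ∫ Kl : ↥(Matrix.specialUnitaryGroup (Fin 2) ℂ),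
          (∫ x in Set.Ici (1 : ℝ), (v x : ℂ) *
            ∫ Kr : ↥(Matrix.specialUnitaryGroup (Fin 2) ℂ),
              designMat t ((Kl : Matrix (Fin 2) (Fin 2) ℂ) * Ax x *
                (Kr : Matrix (Fin 2) (Fin 2) ℂ)) p q ∂μK) ∂μK := by
  classical
  intro p q
  set b : ((Fin t → Fin 2) × (Fin t → Fin 2)) → ℂ := fun r => ∫ U : ↥(Matrix.specialUnitaryGroup (Fin 2) ℂ),
    designMat t (U : Matrix (Fin 2) (Fin 2) ℂ) p r ∂μK with hb
  set B : ((Fin t → Fin 2) × (Fin t → Fin 2)) → ℂ := fun s => ∫ U : ↥(Matrix.specialUnitaryGroup (Fin 2) ℂ),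
    designMat t (U : Matrix (Fin 2) (Fin 2) ℂ) s q ∂μK with hBdef
  set Iv : ((Fin t → Fin 2) × (Fin t → Fin 2)) → ((Fin t → Fin 2) × (Fin t → Fin 2)) → ℂ :=
    fun r s => ∫ x in Set.Ici (1 : ℝ), (v x : ℂ) * designMat t (Ax x) r s with hIv
  -- Step 1: inner SU(2) integral
  have h1 : ∀ (Kl : ↥(Matrix.specialUnitaryGroup (Fin 2) ℂ)) (x : ℝ),
      (∫ Kr : ↥(Matrix.specialUnitaryGroup (Fin 2) ℂ),
        designMat t ((Kl : Matrix (Fin 2) (Fin 2) ℂ) * Ax x *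
          (Kr : Matrix (Fin 2) (Fin 2) ℂ)) p q ∂μK)
      = ∑ s : (Fin t → Fin 2) × (Fin t → Fin 2), (designMat t (Kl : Matrix (Fin 2) (Fin 2) ℂ) * designMat t (Ax x)) p s * B s := by
    intro Kl x
    have hexp : ∀ Kr : ↥(Matrix.specialUnitaryGroup (Fin 2) ℂ),
        designMat t ((Kl : Matrix (Fin 2) (Fin 2) ℂ) * Ax x * (Kr : Matrix (Fin 2) (Fin 2) ℂ)) p q
        = ∑ s : (Fin t → Fin 2) × (Fin t → Fin 2), (designMat t (Kl : Matrix (Fin 2) (Fin 2) ℂ) * designMat t (Ax x)) p s *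
            designMat t (Kr : Matrix (Fin 2) (Fin 2) ℂ) s q := by
      intro Kr
      rw [designMat_mul, designMat_mul, Matrix.mul_apply]
    simp_rw [hexp]
    rw [integral_finset_sum _ (fun s _ => ((integrable_designMat t μK s q).const_mul _))]
    exact Finset.sum_congr rfl fun s _ => integral_const_mul _ _
  -- Step 2: middle integral over x
  have h2 : ∀ Kl : ↥(Matrix.specialUnitaryGroup (Fin 2) ℂ),
      (∫ x in Set.Ici (1 : ℝ), (v x : ℂ) *
        ∑ s : (Fin t → Fin 2) × (Fin t → Fin 2), (designMat t (Kl : Matrix (Fin 2) (Fin 2) ℂ) * designMat t (Ax x)) p s * B s)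
      = ∑ s : (Fin t → Fin 2) × (Fin t → Fin 2), ∑ r : (Fin t → Fin 2) × (Fin t → Fin 2),
          designMat t (Kl : Matrix (Fin 2) (Fin 2) ℂ) p r * B s * Iv r s := by
    intro Kl
    have hre : ∀ x : ℝ,
        (v x : ℂ) * ∑ s : (Fin t → Fin 2) × (Fin t → Fin 2),
          (designMat t (Kl : Matrix (Fin 2) (Fin 2) ℂ) * designMat t (Ax x)) p s * B s
        = ∑ s : (Fin t → Fin 2) × (Fin t → Fin 2), ∑ r : (Fin t → Fin 2) × (Fin t → Fin 2),
            (designMat t (Kl : Matrix (Fin 2) (Fin 2) ℂ) p r * B s) *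
              ((v x : ℂ) * designMat t (Ax x) r s) := by
      intro x
      simp_rw [Matrix.mul_apply, Finset.sum_mul, Finset.mul_sum]
      exact Finset.sum_congr rfl fun s _ => Finset.sum_congr rfl fun r _ => by ring
    simp_rw [hre]
    rw [integral_finset_sum _ (fun s _ =>
      integrable_finset_sum _ (fun r _ => ((hint r s).const_mul _)))]
    refine Finset.sum_congr rfl fun s _ => ?_
    rw [integral_finset_sum _ (fun r _ => ((hint r s).const_mul _))]
    exact Finset.sum_congr rfl fun r _ => integral_const_mul _ _
  -- Step 3: outer SU(2) integral
  have h3 : (∫ Kl : ↥(Matrix.specialUnitaryGroup (Fin 2) ℂ),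
      (∑ s : (Fin t → Fin 2) × (Fin t → Fin 2), ∑ r : (Fin t → Fin 2) × (Fin t → Fin 2),
        designMat t (Kl : Matrix (Fin 2) (Fin 2) ℂ) p r * B s * Iv r s) ∂μK)
      = ∑ s : (Fin t → Fin 2) × (Fin t → Fin 2), ∑ r : (Fin t → Fin 2) × (Fin t → Fin 2), b r * B s * Iv r s := by
    rw [integral_finset_sum _ (fun s _ => integrable_finset_sum _ (fun r _ =>
      (((integrable_designMat t μK p r).mul_const _).mul_const _)))]
    refine Finset.sum_congr rfl fun s _ => ?_
    rw [integral_finset_sum _ (fun r _ =>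
      (((integrable_designMat t μK p r).mul_const _).mul_const _))]
    exact Finset.sum_congr rfl fun r _ => by
      rw [integral_mul_const, integral_mul_const]
  -- rewrite RHS
  have hRHS : (1 / Z : ℂ) * (∫ Kl : ↥(Matrix.specialUnitaryGroup (Fin 2) ℂ),
      (∫ x in Set.Ici (1 : ℝ), (v x : ℂ) *
        ∫ Kr : ↥(Matrix.specialUnitaryGroup (Fin 2) ℂ),
          designMat t ((Kl : Matrix (Fin 2) (Fin 2) ℂ) * Ax x *
            (Kr : Matrix (Fin 2) (Fin 2) ℂ)) p q ∂μK) ∂μK)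
      = (1 / Z : ℂ) * ∑ s : (Fin t → Fin 2) × (Fin t → Fin 2), ∑ r : (Fin t → Fin 2) × (Fin t → Fin 2), b r * B s * Iv r s := by
    simp_rw [h1, h2, h3]
  rw [hRHS]
  -- LHS: distribute the triple sum as a matrix product
  have hterm : ∀ (α : I) (β : J) (γ : I),
      ((k α * a β * k γ : ℝ) : ℂ) • designMat t ((K α : Matrix (Fin 2) (Fin 2) ℂ) * Ax (xs β) *
          (K γ : Matrix (Fin 2) (Fin 2) ℂ))
      = ((k α : ℂ) • designMat t ((K α : Matrix (Fin 2) (Fin 2) ℂ))) *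
        ((a β : ℂ) • designMat t (Ax (xs β))) *
        ((k γ : ℂ) • designMat t ((K γ : Matrix (Fin 2) (Fin 2) ℂ))) := by
    intro α β γ
    rw [designMat_mul, designMat_mul]
    simp only [smul_mul_assoc, mul_smul_comm, smul_smul]
    push_cast
    ring_nf
  have hmatsum :
      (∑ α : I, ∑ β : J, ∑ γ : I, ((k α * a β * k γ : ℝ) : ℂ) •
        designMat t ((K α : Matrix (Fin 2) (Fin 2) ℂ) * Ax (xs β) *
          (K γ : Matrix (Fin 2) (Fin 2) ℂ)))
      = (∑ α : I, (k α : ℂ) • designMat t ((K α : Matrix (Fin 2) (Fin 2) ℂ))) *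
        (∑ β : J, (a β : ℂ) • designMat t (Ax (xs β))) *
        (∑ γ : I, (k γ : ℂ) • designMat t ((K γ : Matrix (Fin 2) (Fin 2) ℂ))) := by
    simp_rw [hterm]
    simp_rw [Finset.sum_mul, Finset.mul_sum]
    simp_rw [Finset.sum_mul]
    exact Finset.sum_congr rfl fun α _ => Finset.sum_comm
  rw [hmatsum, Matrix.mul_apply]
  simp_rw [Matrix.mul_apply]
  have hentryK : ∀ r s : (Fin t → Fin 2) × (Fin t → Fin 2),
      (∑ α : I, (k α : ℂ) • designMat t ((K α : Matrix (Fin 2) (Fin 2) ℂ))) r s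
      = ∑ α : I, ((k α : ℂ) • designMat t ((K α : Matrix (Fin 2) (Fin 2) ℂ))) r s := by
    intro r s; simp [Matrix.sum_apply]
  calc (∑ s : (Fin t → Fin 2) × (Fin t → Fin 2), (∑ r : (Fin t → Fin 2) × (Fin t → Fin 2),
        (∑ α : I, (k α : ℂ) • designMat t ((K α : Matrix (Fin 2) (Fin 2) ℂ))) p r *
        (∑ β : J, (a β : ℂ) • designMat t (Ax (xs β))) r s) *
        (∑ γ : I, (k γ : ℂ) • designMat t ((K γ : Matrix (Fin 2) (Fin 2) ℂ))) s q)
      = ∑ s : (Fin t → Fin 2) × (Fin t → Fin 2), (∑ r : (Fin t → Fin 2) × (Fin t → Fin 2), b r * ((1 / Z : ℂ) * Iv r s)) * B s := by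
        refine Finset.sum_congr rfl fun s _ => ?_
        rw [hKdesign s q]
        congr 1
        refine Finset.sum_congr rfl fun r _ => ?_
        rw [hKdesign p r, hAdesign r s]
    _ = (1 / Z : ℂ) * ∑ s : (Fin t → Fin 2) × (Fin t → Fin 2), ∑ r : (Fin t → Fin 2) × (Fin t → Fin 2), b r * B s * Iv r s := by
        rw [Finset.mul_sum]
        refine Finset.sum_congr rfl fun s _ => ?_
        rw [Finset.sum_mul, Finset.mul_sum]
        exact Finset.sum_congr rfl fun r _ => by ring
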